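/- Let L denote the Lie algebra over ℚ of finitely supported strictly lower triangular ℤ×ℤ matrices, let U(L) be its universal enveloping algebra, and let ι : L → U(L) be the canonical map. Then for all integers i > j and all n ≥ 1, the divided power ι(E_{i,j})ⁿ/n! lies in the ℤ-subalgebra of U(L) generated by the divided powers ι(E_{k+1,k})^m/m! for k ∈ ℤ and m ≥ 1. -/

import Mathlib

attribute [local instance 100] LieRing.ofAssociativeRing

/-- The matrix unit `E_{a,b}`, as the endomorphism of `ℤ →₀ ℚ` sending `v` to
`v(b) • e_a`. -/
noncomputable def Eop (a b : ℤ) : Module.End ℚ (ℤ →₀ ℚ) :=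
  (Finsupp.lsingle a).comp (Finsupp.lapply b)

/-- The Lie algebra `L` over `ℚ` of finitely supported strictly lower triangular
`ℤ×ℤ` matrices, realized as the Lie subalgebra of endomorphisms of `ℤ →₀ ℚ`
generated by the matrix units `E_{a,b}` with `a > b` (it is their linear span). -/
noncomputable def lowerL : LieSubalgebra ℚ (Module.End ℚ (ℤ →₀ ℚ)) :=
  LieSubalgebra.lieSpan ℚ (Module.End ℚ (ℤ →₀ ℚ))
    {x : Module.End ℚ (ℤ →₀ ℚ) | ∃ a b : ℤ, b < a ∧ x = Eop a b}

/-- The element `E_{a,b}` (`a > b`) of `L`. -/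
noncomputable def eElt (a b : ℤ) (h : b < a) : lowerL :=
  ⟨Eop a b, LieSubalgebra.subset_lieSpan ⟨a, b, h, rfl⟩⟩

lemma Eop_apply (a b : ℤ) (v : ℤ →₀ ℚ) : Eop a b v = Finsupp.single a (v b) := rfl

lemma Eop_mul (a b c d : ℤ) : Eop a b * Eop c d = if b = c then Eop a d else 0 := by
  refine LinearMap.ext fun v => ?_
  rw [Module.End.mul_apply, Eop_apply, Eop_apply, Finsupp.single_apply]
  by_cases h : b = c
  · simp [if_pos h.symm, h, Eop_apply]
  · simp [if_neg (Ne.symm h), if_neg h]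
open Finset LinearMap

section key
variable {R : Type*} [Ring R] [Algebra ℚ R] (X Y Z : R)

lemma pow_mul_comm_aux (hXY : X * Y - Y * X = Z) (hZX : Z * X = X * Z) (m : ℕ) :
    X ^ (m + 1) * Y = Y * X ^ (m + 1) + (m + 1 : ℤ) • (Z * X ^ m) := by
  have hxy' : X * Y = Y * X + Z := by rw [← hXY]; abel
  induction m with
  | zero => simpa using hxy'
  | succ m ih =>
      have h2 : X * (Z * X ^ m) = Z * X ^ (m + 1) := by
        rw [← mul_assoc, ← hZX, mul_assoc, ← pow_succ']
      calc X ^ (m + 2) * Y = X * (X ^ (m + 1) * Y) := by rw [pow_succ', mul_assoc]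
        _ = X * (Y * X ^ (m + 1) + (m + 1 : ℤ) • (Z * X ^ m)) := by rw [ih]
        _ = X * Y * X ^ (m + 1) + (m + 1 : ℤ) • (Z * X ^ (m + 1)) := by
              rw [mul_add, mul_smul_comm, h2, mul_assoc]
        _ = Y * X ^ (m + 2) + Z * X ^ (m + 1) + (m + 1 : ℤ) • (Z * X ^ (m + 1)) := by
              rw [hxy', add_mul, mul_assoc, ← pow_succ']
        _ = Y * X ^ (m + 2) + (↑(m + 1) + 1 : ℤ) • (Z * X ^ (m + 1)) := by
              push_cast; module

lemma adpow_apply (hXY : X * Y - Y * X = Z) (hZX : Z * X = X * Z) (hZY : Z * Y = Y * Z)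
    {n m : ℕ} (hnm : n ≤ m) :
    ((mulRight ℚ Y - mulLeft ℚ Y) ^ n) (X ^ m) =
      (m.descFactorial n : ℤ) • (Z ^ n * X ^ (m - n)) := by
  induction n with
  | zero => simp
  | succ n ih =>
      have hn : n ≤ m := Nat.le_of_succ_le hnm
      have hcn : Y * Z ^ n = Z ^ n * Y := ((show Commute Z Y from hZY).pow_left n).symm.eq
      rw [pow_succ', Module.End.mul_apply, ih hn, map_zsmul, LinearMap.sub_apply,
        mulRight_apply, mulLeft_apply]
      have hmn : m - n = (m - (n + 1)) + 1 := by omega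
      have hc : (↑(m - (n + 1)) + 1 : ℤ) = ((m - n : ℕ) : ℤ) := by omega
      have key : Z ^ n * X ^ (m - n) * Y - Y * (Z ^ n * X ^ (m - n))
          = ((m - n : ℕ) : ℤ) • (Z ^ (n + 1) * X ^ (m - (n + 1))) := by
        rw [mul_assoc, ← mul_assoc Y, hcn, mul_assoc, ← mul_sub, hmn,
          pow_mul_comm_aux X Y Z hXY hZX, add_sub_cancel_left, mul_smul_comm,
          ← mul_assoc, ← pow_succ]
        congr 1
      rw [key, Nat.descFactorial_succ, smul_smul]
      congr 1
      push_cast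
      ring

lemma adpow_sum (n m : ℕ) :
    ((mulRight ℚ Y - mulLeft ℚ Y) ^ n) (X ^ m) =
      ∑ k ∈ Finset.range (n + 1),
        (n.choose k : ℤ) • ((-1 : ℤ) ^ k • (Y ^ k * (X ^ m * Y ^ (n - k)))) := by
  have hc : Commute (-(mulLeft ℚ Y : Module.End ℚ R)) (mulRight ℚ Y) :=
    (show Commute (mulLeft ℚ Y : Module.End ℚ R) (mulRight ℚ Y) from
      LinearMap.commute_mulLeft_right Y Y).neg_left
  rw [sub_eq_neg_add, hc.add_pow, LinearMap.sum_apply]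
  refine Finset.sum_congr rfl fun k hk => ?_
  rw [Module.End.mul_apply, Module.End.mul_apply, Module.End.natCast_apply]
  rcases Nat.even_or_odd k with he | ho
  · simp [he.neg_pow, he.neg_one_pow, pow_mulLeft, pow_mulRight, smul_mul_assoc,
      mul_smul_comm, natCast_zsmul, mul_assoc]
    exact ((Nat.cast_commute (n.choose k) (Y ^ k)).symm).left_comm _
  · simp [ho.neg_pow, ho.neg_one_pow, pow_mulLeft, pow_mulRight, smul_mul_assoc,
      mul_smul_comm, natCast_zsmul, mul_assoc]
    exact ((Nat.cast_commute (n.choose k) (Y ^ k)).symm).left_comm _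

lemma divided_identity (hXY : X * Y - Y * X = Z) (hZX : Z * X = X * Z)
    (hZY : Z * Y = Y * Z) (n : ℕ) :
    (n.factorial : ℚ)⁻¹ • Z ^ n =
      ∑ k ∈ Finset.range (n + 1),
        (-1 : ℤ) ^ k • (((k.factorial : ℚ)⁻¹ • Y ^ k) * (((n.factorial : ℚ)⁻¹ • X ^ n) *
          (((n - k).factorial : ℚ)⁻¹ • Y ^ (n - k))) ) := by
  have base : (n.factorial : ℤ) • Z ^ n =
      ∑ k ∈ Finset.range (n + 1),
        (n.choose k : ℤ) • ((-1 : ℤ) ^ k • (Y ^ k * (X ^ n * Y ^ (n - k)))) := by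
    rw [← adpow_sum, adpow_apply X Y Z hXY hZX hZY le_rfl, Nat.descFactorial_self,
      Nat.sub_self, pow_zero, mul_one]
  have hfac : (n.factorial : ℚ) ≠ 0 := by exact_mod_cast n.factorial_ne_zero
  have step := congrArg (fun w => ((n.factorial : ℚ)⁻¹ * (n.factorial : ℚ)⁻¹) • w) base
  simp only [Finset.smul_sum] at step
  have lhs_eq : ((n.factorial : ℚ)⁻¹ * (n.factorial : ℚ)⁻¹) • ((n.factorial : ℤ) • Z ^ n)
      = (n.factorial : ℚ)⁻¹ • Z ^ n := by
    rw [← Int.cast_smul_eq_zsmul ℚ, smul_smul]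
    push_cast
    rw [mul_assoc, inv_mul_cancel₀ hfac, mul_one]
  rw [lhs_eq] at step
  rw [step]
  refine Finset.sum_congr rfl fun k hk => ?_
  have hk' : k ≤ n := by
    simp only [Finset.mem_range] at hk; omega
  have hkf : (k.factorial : ℚ) ≠ 0 := by exact_mod_cast k.factorial_ne_zero
  have hnkf : ((n - k).factorial : ℚ) ≠ 0 := by exact_mod_cast (n - k).factorial_ne_zero
  have hterm1 : ((k.factorial : ℚ)⁻¹ • Y ^ k) * (((n.factorial : ℚ)⁻¹ • X ^ n) *
      (((n - k).factorial : ℚ)⁻¹ • Y ^ (n - k)))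
      = ((k.factorial : ℚ)⁻¹ * ((n.factorial : ℚ)⁻¹ * ((n - k).factorial : ℚ)⁻¹)) •
        (Y ^ k * (X ^ n * Y ^ (n - k))) := by
    simp only [smul_mul_assoc, mul_smul_comm, smul_smul]
    congr 1
    ring
  rw [hterm1, ← Int.cast_smul_eq_zsmul ℚ ((n.choose k : ℤ)),
    ← Int.cast_smul_eq_zsmul ℚ ((-1 : ℤ) ^ k), ← Int.cast_smul_eq_zsmul ℚ ((-1 : ℤ) ^ k),
    smul_smul, smul_smul, smul_smul]
  congr 1
  have hchoose : (n.choose k : ℚ) * (k.factorial : ℚ) * ((n - k).factorial : ℚ)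
      = (n.factorial : ℚ) := by
    exact_mod_cast congrArg (Nat.cast : ℕ → ℚ) (Nat.choose_mul_factorial_mul_factorial hk')
  push_cast
  field_simp
  linear_combination hchoose
end key

lemma eElt_congr {a a' b b' : ℤ} (ha : a = a') (hb : b = b') (h : b < a) (h' : b' < a') :
    eElt a b h = eElt a' b' h' := by subst ha; subst hb; rfl

lemma coe_eElt (a b : ℤ) (h : b < a) : (eElt a b h : Module.End ℚ (ℤ →₀ ℚ)) = Eop a b := rfl

lemma bracket_eElt (a b c : ℤ) (hab : b < a) (hbc : c < b) (hac : c < a) :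
    ⁅eElt a b hab, eElt b c hbc⁆ = eElt a c hac := by
  apply Subtype.ext
  rw [LieSubalgebra.coe_bracket, coe_eElt, coe_eElt, coe_eElt, Ring.lie_def,
    Eop_mul, Eop_mul, if_pos rfl, if_neg hac.ne, sub_zero]

lemma bracket_eElt_zero (a b c d : ℤ) (hab : b < a) (hcd : d < c)
    (h1 : b ≠ c) (h2 : d ≠ a) : ⁅eElt a b hab, eElt c d hcd⁆ = 0 := by
  apply Subtype.ext
  rw [LieSubalgebra.coe_bracket, coe_eElt, coe_eElt, Ring.lie_def,
    Eop_mul, Eop_mul, if_neg h1, if_neg h2, sub_zero]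
  rfl

noncomputable def genA : Subalgebra ℤ (UniversalEnvelopingAlgebra ℚ lowerL) :=
  Algebra.adjoin ℤ
    {y : UniversalEnvelopingAlgebra ℚ lowerL |
      ∃ (k : ℤ) (m : ℕ), 1 ≤ m ∧
        y = ((Nat.factorial m : ℚ))⁻¹ •
          (UniversalEnvelopingAlgebra.ι ℚ (eElt (k + 1) k (lt_add_one k))) ^ m}

lemma gen_mem (k : ℤ) (m : ℕ) :
    ((m.factorial : ℚ)⁻¹ •
      (UniversalEnvelopingAlgebra.ι ℚ (eElt (k + 1) k (lt_add_one k))) ^ m) ∈ genA := by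
  cases m with
  | zero => simpa using genA.one_mem
  | succ m => exact Algebra.subset_adjoin ⟨k, m + 1, Nat.succ_le_succ (Nat.zero_le m), rfl⟩

lemma comm_of_bracket_zero {x y : lowerL} (h : ⁅x, y⁆ = 0) :
    (UniversalEnvelopingAlgebra.ι ℚ x) * (UniversalEnvelopingAlgebra.ι ℚ y)
      = (UniversalEnvelopingAlgebra.ι ℚ y) * (UniversalEnvelopingAlgebra.ι ℚ x) := by
  have := (UniversalEnvelopingAlgebra.ι ℚ (L := lowerL)).map_lie x y
  rw [h, Ring.lie_def, map_zero] at this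
  exact sub_eq_zero.mp this.symm

lemma main_aux : ∀ (d : ℕ) (i j : ℤ) (h : j < i), i = j + 1 + d → ∀ n : ℕ,
    ((n.factorial : ℚ)⁻¹ • (UniversalEnvelopingAlgebra.ι ℚ (eElt i j h)) ^ n) ∈ genA := by
  intro d
  induction d with
  | zero =>
      intro i j h hij n
      rw [eElt_congr (show i = j + 1 by omega) rfl h (lt_add_one j)]
      exact gen_mem j n
  | succ d ih =>
      intro i j h hij n
      have hj1i : j + 1 < i := by omega
      have hx := eElt i (j + 1) hj1i
      have hbr : ⁅eElt i (j + 1) hj1i, eElt (j + 1) j (lt_add_one j)⁆ = eElt i j h :=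
        bracket_eElt i (j + 1) j hj1i (lt_add_one j) h
      have hzx : ⁅eElt i j h, eElt i (j + 1) hj1i⁆ = 0 :=
        bracket_eElt_zero i j i (j + 1) h hj1i (by omega) (by omega)
      have hzy : ⁅eElt i j h, eElt (j + 1) j (lt_add_one j)⁆ = 0 :=
        bracket_eElt_zero i j (j + 1) j h (lt_add_one j) (by omega) (by omega)
      set I := UniversalEnvelopingAlgebra.ι ℚ (L := lowerL) with hI
      have hXY : I (eElt i (j + 1) hj1i) * I (eElt (j + 1) j (lt_add_one j))
          - I (eElt (j + 1) j (lt_add_one j)) * I (eElt i (j + 1) hj1i) = I (eElt i j h) := by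
        rw [← Ring.lie_def, ← LieHom.map_lie, hbr]
      have hZX := comm_of_bracket_zero hzx
      have hZY := comm_of_bracket_zero hzy
      rw [divided_identity _ _ _ hXY hZX hZY n]
      refine Subalgebra.sum_mem _ fun k hk => ?_
      refine zsmul_mem (mul_mem (gen_mem j k) (mul_mem ?_ (gen_mem j (n - k)))) _
      exact ih i (j + 1) hj1i (by push_cast; omega) n

/-- In the universal enveloping algebra `U(L)` of the Lie algebra `L` of finitely
supported strictly lower triangular `ℤ×ℤ` matrices over `ℚ`, every divided power
`ι(E_{i,j})ⁿ/n!` (`i > j`, `n ≥ 1`) lies in the `ℤ`-subalgebra generated by the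
divided powers `ι(E_{k+1,k})^m/m!` (`k ∈ ℤ`, `m ≥ 1`). -/
theorem divided_power_mem_integral_form (i j : ℤ) (h : j < i) (n : ℕ) (hn : 1 ≤ n) :
    (((Nat.factorial n : ℚ))⁻¹ •
        (UniversalEnvelopingAlgebra.ι ℚ (eElt i j h)) ^ n) ∈
      Algebra.adjoin ℤ
        {y : UniversalEnvelopingAlgebra ℚ lowerL |
          ∃ (k : ℤ) (m : ℕ), 1 ≤ m ∧
            y = ((Nat.factorial m : ℚ))⁻¹ •
              (UniversalEnvelopingAlgebra.ι ℚ (eElt (k + 1) k (lt_add_one k))) ^ m} :=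
  main_aux (i - j - 1).toNat i j h (by omega) n
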